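/- There exists a unique formal power series f ∈ ℝ⟦X⟧ with f(0) = 0 and first coefficient 1 satisfying the formal identity f'' · (f' ∘ f⁻¹) = f', where f⁻¹ is the compositional inverse power series of f. Its first coefficients are f = X + X²/2 + 0·X³ + X⁴/24 - X⁵/20 + ⋯. -/

import Mathlib

open PowerSeries

/-- Composition `f ∘ g` of formal power series (intended for `g` with zero constant term):
the `n`-th coefficient only depends on the first `n + 1` terms of `f`. -/
noncomputable def PowerSeries.compose (f g : PowerSeries ℝ) : PowerSeries ℝ :=
  PowerSeries.mk fun n =>
    PowerSeries.coeff n (∑ k ∈ Finset.range (n + 1), PowerSeries.C (PowerSeries.coeff k f) * g ^ k)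

namespace StmtAux
open Finset

lemma coeff_derivativeFun_aux (f : ℝ⟦X⟧) (n : ℕ) :
    coeff n f.derivativeFun = coeff (n + 1) f * (n + 1) :=
  coeff_derivative f n

lemma coeff_eq_zero_of_dvd {n : ℕ} {v : PowerSeries ℝ} (h : (X : ℝ⟦X⟧)^(n+1) ∣ v) :
    coeff n v = 0 :=
  PowerSeries.X_pow_dvd_iff.mp h n n.lt_succ_self

lemma X_pow_dvd_of_agree {n : ℕ} {g₁ g₂ : ℝ⟦X⟧} (h : ∀ i < n, coeff i g₁ = coeff i g₂) :
    (X : ℝ⟦X⟧)^n ∣ g₁ - g₂ := by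
  rw [PowerSeries.X_pow_dvd_iff]
  intro d hd
  simp [h d hd, sub_eq_zero]

lemma coeff_congr_of_dvd {n : ℕ} {s t : PowerSeries ℝ} (h : (X : ℝ⟦X⟧)^(n+1) ∣ s - t) :
    coeff n s = coeff n t := by
  have := coeff_eq_zero_of_dvd h
  rw [map_sub, sub_eq_zero] at this
  exact this

lemma coeff_pow_zero_of_lt {g : ℝ⟦X⟧} (hg : constantCoeff g = 0) {n k : ℕ} (h : n < k) :
    coeff n (g ^ k) = 0 := by
  have : (X : ℝ⟦X⟧)^k ∣ g^k := pow_dvd_pow_of_dvd (PowerSeries.X_dvd_iff.mpr hg) k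
  exact PowerSeries.X_pow_dvd_iff.mp this n h

/-- powers congruence, version: agreement up to `n` (i.e. `< n+1`), any `k`. -/
lemma coeff_pow_congr {g₁ g₂ : ℝ⟦X⟧} {n : ℕ}
    (h : ∀ i ≤ n, coeff i g₁ = coeff i g₂) (k : ℕ) :
    coeff n (g₁ ^ k) = coeff n (g₂ ^ k) := by
  cases k with
  | zero => simp
  | succ k =>
    apply coeff_congr_of_dvd
    have h1 : (X : ℝ⟦X⟧)^(n+1) ∣ g₁ - g₂ :=
      X_pow_dvd_of_agree (fun i hi => h i (Nat.lt_succ_iff.mp hi))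
    exact h1.trans (sub_dvd_pow_sub_pow g₁ g₂ (k+1))

/-- powers congruence, refined version: agreement `< n`, `k ≥ 2`, zero constant terms. -/
lemma coeff_pow_congr' {g₁ g₂ : ℝ⟦X⟧} (h₁ : constantCoeff g₁ = 0)
    (h₂ : constantCoeff g₂ = 0) {n : ℕ}
    (h : ∀ i < n, coeff i g₁ = coeff i g₂) {k : ℕ} (hk : 2 ≤ k) :
    coeff n (g₁ ^ k) = coeff n (g₂ ^ k) := by
  apply coeff_congr_of_dvd
  have h1 : (X : ℝ⟦X⟧)^n ∣ g₁ - g₂ := X_pow_dvd_of_agree h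
  have h2 : (X : ℝ⟦X⟧) ∣ ∑ i ∈ range k, g₁ ^ i * g₂ ^ (k - 1 - i) := by
    apply Finset.dvd_sum
    intro i _
    rcases Nat.eq_zero_or_pos i with hi0 | hi0
    · subst hi0
      exact Dvd.dvd.mul_left (dvd_pow (PowerSeries.X_dvd_iff.mpr h₂) (by omega)) _
    · exact Dvd.dvd.mul_right (dvd_pow (PowerSeries.X_dvd_iff.mpr h₁) (by omega)) _
  have := mul_dvd_mul h2 h1
  rw [geom_sum₂_mul] at this
  calc (X : ℝ⟦X⟧)^(n+1) = X * X^n := by ring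
  _ ∣ g₁ ^ k - g₂ ^ k := this

lemma coeff_compose (f g : ℝ⟦X⟧) (n : ℕ) :
    coeff n (f.compose g) = ∑ k ∈ range (n+1), coeff k f * coeff n (g ^ k) := by
  rw [PowerSeries.compose, coeff_mk, map_sum]
  exact Finset.sum_congr rfl fun k _ => by rw [coeff_C_mul]

lemma coeff_compose_eval (f g : ℝ⟦X⟧) (n : ℕ) :
    coeff n (f.compose g) = coeff n ((trunc (n+1) f).eval₂ (C) g) := by
  rw [PowerSeries.compose, coeff_mk, eval₂_trunc_eq_sum_range]

lemma coeff_eval₂_congr_left {g : ℝ⟦X⟧} (hg : constantCoeff g = 0) {n : ℕ}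
    {P Q : Polynomial ℝ} (h : ∀ i ≤ n, P.coeff i = Q.coeff i) :
    coeff n (P.eval₂ (C) g) = coeff n (Q.eval₂ (C) g) := by
  have hdvd : (Polynomial.X : Polynomial ℝ)^(n+1) ∣ P - Q := by
    rw [Polynomial.X_pow_dvd_iff]
    intro d hd
    simp [h d (Nat.lt_succ_iff.mp hd), sub_eq_zero]
  obtain ⟨R, hR⟩ := hdvd
  apply coeff_congr_of_dvd
  have : P.eval₂ (C) g - Q.eval₂ (C) g = (P - Q).eval₂ (C) g := by
    rw [Polynomial.eval₂_sub]
  rw [this, hR, Polynomial.eval₂_mul, Polynomial.eval₂_X_pow]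
  exact Dvd.dvd.mul_right (pow_dvd_pow_of_dvd (PowerSeries.X_dvd_iff.mpr hg) _) _

lemma coeff_eval₂_congr_right {g₁ g₂ : ℝ⟦X⟧} {n : ℕ}
    (h : ∀ i ≤ n, coeff i g₁ = coeff i g₂) (P : Polynomial ℝ) :
    coeff n (P.eval₂ (C) g₁) = coeff n (P.eval₂ (C) g₂) := by
  rw [Polynomial.eval₂_eq_sum_range, Polynomial.eval₂_eq_sum_range, map_sum, map_sum]
  apply Finset.sum_congr rfl
  intro k _
  rw [coeff_C_mul, coeff_C_mul, coeff_pow_congr h]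

/-- Main congruence lemma: the `n`-th coefficient of `f.compose g` only depends on
the coefficients of `f` and `g` up to `n`. -/
lemma coeff_compose_congr {f₁ f₂ g₁ g₂ : ℝ⟦X⟧} {n : ℕ}
    (hg₁ : constantCoeff g₁ = 0)
    (hf : ∀ i ≤ n, coeff i f₁ = coeff i f₂)
    (hg : ∀ i ≤ n, coeff i g₁ = coeff i g₂) :
    coeff n (f₁.compose g₁) = coeff n (f₂.compose g₂) := by
  rw [coeff_compose_eval, coeff_compose_eval]
  rw [coeff_eval₂_congr_left hg₁ (P := trunc (n+1) f₁) (Q := trunc (n+1) f₂)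
    (fun i hi => by rw [coeff_trunc, coeff_trunc]; split <;> simp [hf i hi])]
  exact coeff_eval₂_congr_right hg _

lemma constantCoeff_compose (f : ℝ⟦X⟧) {g : ℝ⟦X⟧} (hg : constantCoeff g = 0) :
    constantCoeff (f.compose g) = constantCoeff f := by
  have := coeff_compose f g 0
  simp only [zero_add, range_one, sum_singleton, pow_zero, coeff_zero_eq_constantCoeff] at this ⊢
  simpa using this

lemma compose_X_right (f : ℝ⟦X⟧) : f.compose X = f := by
  ext n
  rw [coeff_compose]
  rw [Finset.sum_eq_single n]
  · simp [PowerSeries.coeff_X_pow]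
  · intro k _ hk
    simp [PowerSeries.coeff_X_pow, hk, (Ne.symm hk)]
  · simp

lemma compose_X_left {g : ℝ⟦X⟧} (hg : constantCoeff g = 0) : (X : ℝ⟦X⟧).compose g = g := by
  ext n
  rw [coeff_compose]
  rcases Nat.eq_zero_or_pos n with rfl | hn
  · simpa using hg.symm
  · rw [Finset.sum_eq_single 1]
    · simp [PowerSeries.coeff_X]
    · intro k _ hk
      simp [PowerSeries.coeff_X, hk]
    · intro h
      exact absurd (Finset.mem_range.mpr (by omega)) h


lemma coeff_compose_eval' (f : ℝ⟦X⟧) {g : ℝ⟦X⟧} (hg : constantCoeff g = 0)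
    {n m : ℕ} (hnm : n ≤ m) :
    coeff n (f.compose g) = coeff n ((trunc (m+1) f).eval₂ (C) g) := by
  rw [coeff_compose_eval]
  apply coeff_eval₂_congr_left hg
  intro i hi
  rw [PowerSeries.coeff_trunc, PowerSeries.coeff_trunc, if_pos (by omega), if_pos (by omega)]

lemma compose_C (r : ℝ) (g : ℝ⟦X⟧) : (C r).compose g = C r := by
  ext n
  rw [coeff_compose, Finset.sum_eq_single 0]
  · simp [coeff_C]
  · intro k _ hk
    simp [coeff_C, hk]
  · simp

lemma compose_one (g : ℝ⟦X⟧) : (1 : ℝ⟦X⟧).compose g = 1 := by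
  have := compose_C 1 g
  simpa using this

lemma compose_add_left (f₁ f₂ g : ℝ⟦X⟧) :
    (f₁ + f₂).compose g = f₁.compose g + f₂.compose g := by
  ext n
  simp only [map_add, coeff_compose, map_add, add_mul, Finset.sum_add_distrib]

lemma compose_sum_left {ι : Type*} (s : Finset ι) (F : ι → ℝ⟦X⟧) (g : ℝ⟦X⟧) :
    (∑ i ∈ s, F i).compose g = ∑ i ∈ s, (F i).compose g := by
  classical
  induction s using Finset.induction_on with
  | empty =>
    ext n
    simp [coeff_compose]
  | insert _ _ hx ih =>
    rw [Finset.sum_insert hx, Finset.sum_insert hx, compose_add_left, ih]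

lemma compose_mul_left {g : ℝ⟦X⟧} (hg : constantCoeff g = 0) (f₁ f₂ : ℝ⟦X⟧) :
    (f₁ * f₂).compose g = f₁.compose g * f₂.compose g := by
  ext n
  have hL : coeff n ((f₁ * f₂).compose g)
      = coeff n ((trunc (n+1) f₁ * trunc (n+1) f₂).eval₂ (C) g) := by
    rw [coeff_compose_eval]
    apply coeff_eval₂_congr_left hg
    intro i hi
    rw [PowerSeries.coeff_trunc, if_pos (by omega),
      coeff_mul_eq_coeff_trunc_mul_trunc f₁ f₂ (by omega : i < n+1),
      ← Polynomial.coe_mul, Polynomial.coeff_coe]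
  rw [hL, Polynomial.eval₂_mul, PowerSeries.coeff_mul, PowerSeries.coeff_mul]
  apply Finset.sum_congr rfl
  intro p hp
  rw [Finset.HasAntidiagonal.mem_antidiagonal] at hp
  rw [coeff_compose_eval' f₁ hg (by omega : p.1 ≤ n), coeff_compose_eval' f₂ hg (by omega : p.2 ≤ n)]

lemma compose_pow_left {g h : ℝ⟦X⟧} (hh : constantCoeff h = 0) (k : ℕ) :
    (g ^ k).compose h = (g.compose h) ^ k := by
  induction k with
  | zero => simpa using compose_one h
  | succ k ih => rw [pow_succ, pow_succ, compose_mul_left hh, ih]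

lemma compose_assoc (f : ℝ⟦X⟧) {g h : ℝ⟦X⟧} (hg : constantCoeff g = 0)
    (hh : constantCoeff h = 0) :
    (f.compose g).compose h = f.compose (g.compose h) := by
  ext n
  have hgh : constantCoeff (g.compose h) = 0 := by
    rw [constantCoeff_compose g hh, hg]
  have key : coeff n ((f.compose g).compose h)
      = coeff n (((trunc (n+1) f).eval₂ (C) g).compose h) := by
    rw [coeff_compose_eval, coeff_compose_eval]
    apply coeff_eval₂_congr_left hh
    intro i hi
    rw [PowerSeries.coeff_trunc, PowerSeries.coeff_trunc, if_pos (by omega), if_pos (by omega)]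
    exact coeff_compose_eval' f hg (by omega)
  rw [key]
  rw [eval₂_trunc_eq_sum_range, compose_sum_left]
  have : ∀ k ∈ Finset.range (n+1), (C (coeff k f) * g ^ k).compose h
      = C (coeff k f) * (g.compose h) ^ k := by
    intro k _
    rw [compose_mul_left hh, compose_C, compose_pow_left hh]
  rw [Finset.sum_congr rfl this, coeff_compose_eval, eval₂_trunc_eq_sum_range]

/-- Coefficients of the (right) compositional inverse of `f`, defined recursively. -/
noncomputable def icf (f : ℝ⟦X⟧) : ℕ → ℝ
  | n =>
    if n = 0 then 0 else
      (if n = 1 then (1:ℝ) else 0) -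
        ∑ k ∈ Finset.Icc 2 n, coeff k f *
          coeff n ((PowerSeries.mk fun i => if h : i < n then icf f i else 0) ^ k)
  termination_by n => n
  decreasing_by exact h

lemma icf_zero (f : ℝ⟦X⟧) : icf f 0 = 0 := by rw [icf]; simp

lemma icf_one (f : ℝ⟦X⟧) : icf f 1 = 1 := by rw [icf]; simp

lemma constantCoeff_icf (f : ℝ⟦X⟧) : constantCoeff (PowerSeries.mk (icf f)) = 0 := by
  rw [← coeff_zero_eq_constantCoeff_apply, coeff_mk, icf_zero]

lemma icf_spec {f : ℝ⟦X⟧} (hf0 : constantCoeff f = 0) (hf1 : coeff 1 f = 1) :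
    f.compose (PowerSeries.mk (icf f)) = X := by
  ext n
  rw [coeff_compose]
  rcases Nat.eq_zero_or_pos n with rfl | hn
  · simpa using hf0
  · -- split the sum into k = 0, k = 1 and 2 ≤ k ≤ n
    have hsplit : Finset.range (n+1) = insert 0 (insert 1 (Finset.Icc 2 n)) := by
      ext k
      simp [Finset.mem_range, Finset.mem_Icc, Finset.mem_insert]
      omega
    have h0 : coeff 0 f * coeff n ((PowerSeries.mk (icf f)) ^ 0) = 0 := by
      rw [← coeff_zero_eq_constantCoeff_apply] at hf0
      rw [hf0]; ring
    have hpowcongr : ∀ k ∈ Finset.Icc 2 n,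
        coeff k f * coeff n ((PowerSeries.mk (icf f)) ^ k)
        = coeff k f * coeff n ((PowerSeries.mk fun i => if h : i < n then icf f i else 0) ^ k) := by
      intro k hk
      rw [Finset.mem_Icc] at hk
      congr 1
      apply coeff_pow_congr' (constantCoeff_icf f) _ _ hk.1
      · rw [← coeff_zero_eq_constantCoeff_apply, coeff_mk]
        simp [icf_zero, hn]
      · intro i hi
        rw [coeff_mk, coeff_mk, dif_pos hi]
    rw [hsplit, Finset.sum_insert (by simp), Finset.sum_insert (by simp)]
    rw [h0, Finset.sum_congr rfl hpowcongr]
    rw [hf1, pow_one, coeff_mk]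
    rw [icf]
    simp only [if_neg (by omega : ¬ n = 0)]
    rw [PowerSeries.coeff_X]
    split <;> ring

lemma icf_congr {f₁ f₂ : ℝ⟦X⟧} {n : ℕ} (h : ∀ i ≤ n, coeff i f₁ = coeff i f₂) :
    ∀ i ≤ n, icf f₁ i = icf f₂ i := by
  intro i
  induction i using Nat.strong_induction_on with
  | _ i IH =>
    intro hin
    rw [icf, icf]
    congr 1
    congr 1
    apply Finset.sum_congr rfl
    intro k hk
    rw [Finset.mem_Icc] at hk
    have hmk : (PowerSeries.mk fun j => if h : j < i then icf f₁ j else 0)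
        = (PowerSeries.mk fun j => if h : j < i then icf f₂ j else 0) := by
      ext j
      rw [coeff_mk, coeff_mk]
      split
      · next hj => exact IH j hj (le_trans (le_of_lt hj) hin)
      · rfl
    rw [h k (le_trans hk.2 hin), hmk]

lemma icf_coeff_one {f : ℝ⟦X⟧} : coeff 1 (PowerSeries.mk (icf f)) = 1 := by
  rw [coeff_mk, icf_one]

/-- `mk (icf f)` is a two-sided compositional inverse. -/
lemma icf_spec₂ {f : ℝ⟦X⟧} (hf0 : constantCoeff f = 0) (hf1 : coeff 1 f = 1) :
    (PowerSeries.mk (icf f)).compose f = X := by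
  set g := PowerSeries.mk (icf f) with hgdef
  have hg0 : constantCoeff g = 0 := constantCoeff_icf f
  have hfg : f.compose g = X := icf_spec hf0 hf1
  set h := PowerSeries.mk (icf g) with hhdef
  have hh0 : constantCoeff h = 0 := constantCoeff_icf g
  have hgh : g.compose h = X := icf_spec hg0 icf_coeff_one
  have hfh : f = h := by
    calc f = f.compose X := (compose_X_right f).symm
    _ = f.compose (g.compose h) := by rw [hgh]
    _ = (f.compose g).compose h := (compose_assoc f hg0 hh0).symm
    _ = X.compose h := by rw [hfg]
    _ = h := compose_X_left hh0
  rw [hfh]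
  exact hgh

lemma inverse_unique {f g' : ℝ⟦X⟧} (hf0 : constantCoeff f = 0) (hf1 : coeff 1 f = 1)
    (hg'0 : constantCoeff g' = 0) (hfg' : f.compose g' = X) :
    g' = PowerSeries.mk (icf f) := by
  set g := PowerSeries.mk (icf f) with hgdef
  have hgf : g.compose f = X := icf_spec₂ hf0 hf1
  calc g' = X.compose g' := (compose_X_left hg'0).symm
  _ = (g.compose f).compose g' := by rw [hgf]
  _ = g.compose (f.compose g') := compose_assoc g hf0 hg'0
  _ = g.compose X := by rw [hfg']
  _ = g := compose_X_right g

/-- Truncated power series from the first `m` values of `a`. -/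
noncomputable def truncSeries (a : ℕ → ℝ) (m : ℕ) : ℝ⟦X⟧ :=
  PowerSeries.mk fun j => if j < m then a j else 0

/-- Coefficients of the unique solution of `f'' ⬝ (f' ∘ f⁻¹) = f'`. -/
noncomputable def sol : ℕ → ℝ
  | 0 => 0
  | 1 => 1
  | n + 2 =>
    (((n:ℝ)+1) * sol (n+1) -
      ∑ i ∈ (Finset.range n).attach,
        ((i.1:ℝ)+1)*((i.1:ℝ)+2) * sol (i.1+2) *
          coeff (n - i.1)
            ((PowerSeries.mk fun j => if h : j < n + 2 then sol j else 0).derivativeFun.compose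
              (PowerSeries.mk (icf (PowerSeries.mk fun j => if h : j < n + 2 then sol j else 0)))))
      / (((n:ℝ)+1)*((n:ℝ)+2))
  termination_by n => n
  decreasing_by
  · omega
  · have := i.2; simp only [Finset.mem_range] at this; omega
  · exact h
  · exact h

lemma sol_zero : sol 0 = 0 := by rw [sol]
lemma sol_one : sol 1 = 1 := by rw [sol]

lemma constantCoeff_mk_sol : constantCoeff (PowerSeries.mk sol) = 0 := by
  rw [← coeff_zero_eq_constantCoeff_apply, coeff_mk, sol_zero]

lemma coeff_one_mk_sol : coeff 1 (PowerSeries.mk sol) = 1 := by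
  rw [coeff_mk, sol_one]

lemma sol_spec :
    (PowerSeries.mk sol).derivativeFun.derivativeFun *
      (PowerSeries.mk sol).derivativeFun.compose (PowerSeries.mk (icf (PowerSeries.mk sol)))
    = (PowerSeries.mk sol).derivativeFun := by
  set f := PowerSeries.mk sol with hfdef
  set g := PowerSeries.mk (icf f) with hgdef
  have hg0 : constantCoeff g = 0 := constantCoeff_icf f
  ext n
  rw [PowerSeries.coeff_mul, Finset.Nat.sum_antidiagonal_eq_sum_range_succ_mk,
    Finset.sum_range_succ]
  -- the compose factor congruence
  set F : ℝ⟦X⟧ := PowerSeries.mk fun j => if h : j < n + 2 then sol j else 0 with hFdef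
  set G : ℝ⟦X⟧ := PowerSeries.mk (icf F) with hGdef
  have hFf : ∀ i ≤ n + 1, coeff i F = coeff i f := by
    intro i hi
    rw [hFdef, hfdef, coeff_mk, coeff_mk, dif_pos (by omega)]
  have hGg : ∀ i ≤ n + 1, coeff i G = coeff i g := by
    intro i hi
    rw [hGdef, hgdef, coeff_mk, coeff_mk]
    exact icf_congr hFf i hi
  have hkey : ∀ q ≤ n, coeff q (f.derivativeFun.compose g)
      = coeff q (F.derivativeFun.compose G) := by
    intro q hq
    apply coeff_compose_congr hg0
    · intro i hi
      rw [coeff_derivativeFun_aux, coeff_derivativeFun_aux, hFf (i+1) (by omega)]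
    · intro i hi
      exact (hGg i (by omega)).symm
  have hc0 : coeff 0 (f.derivativeFun.compose g) = 1 := by
    rw [coeff_zero_eq_constantCoeff_apply, constantCoeff_compose _ hg0,
      ← coeff_zero_eq_constantCoeff_apply, coeff_derivativeFun_aux]
    simp [hfdef, sol_one]
  have hcoeff2 : ∀ p : ℕ, coeff p f.derivativeFun.derivativeFun
      = sol (p+2) * ((p:ℝ)+2) * ((p:ℝ)+1) := by
    intro p
    rw [coeff_derivativeFun_aux, coeff_derivativeFun_aux, hfdef, coeff_mk]
    push_cast
    ring
  have hRHS : coeff n f.derivativeFun = sol (n+1) * ((n:ℝ)+1) := by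
    rw [coeff_derivativeFun_aux, hfdef, coeff_mk]
    try push_cast
    try ring
  simp only [Nat.sub_self]
  rw [hRHS, hc0, hcoeff2 n]
  have hsum : ∀ p ∈ Finset.range n,
      coeff p f.derivativeFun.derivativeFun * coeff (n - p) (f.derivativeFun.compose g)
      = ((p:ℝ)+1)*((p:ℝ)+2) * sol (p+2) * coeff (n - p) (F.derivativeFun.compose G) := by
    intro p hp
    rw [Finset.mem_range] at hp
    rw [hcoeff2, hkey (n - p) (by omega)]
    ring
  rw [Finset.sum_congr rfl hsum]
  have hsol : sol (n + 2) =
      (((n:ℝ)+1) * sol (n+1) -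
        ∑ i ∈ (Finset.range n).attach,
          ((i.1:ℝ)+1)*((i.1:ℝ)+2) * sol (i.1+2) *
            coeff (n - i.1) (F.derivativeFun.compose G))
        / (((n:ℝ)+1)*((n:ℝ)+2)) := by
    conv_lhs => rw [sol]
  rw [Finset.sum_attach (Finset.range n)
    (fun i => ((i:ℝ)+1)*((i:ℝ)+2) * sol (i+2) * coeff (n - i) (F.derivativeFun.compose G))] at hsol
  rw [hsol]
  have hne : (((n:ℝ)+1)*((n:ℝ)+2)) ≠ 0 := by positivity
  field_simp
  ring

/-- Expansion of the `m`-th coefficient of the differential equation. -/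
lemma coeff_eq_expand {f g : ℝ⟦X⟧} (hf1 : coeff 1 f = 1)
    (hg0 : constantCoeff g = 0)
    (heq : f.derivativeFun.derivativeFun * f.derivativeFun.compose g = f.derivativeFun)
    (m : ℕ) :
    (∑ p ∈ Finset.range m,
        coeff p f.derivativeFun.derivativeFun * coeff (m - p) (f.derivativeFun.compose g))
      + coeff m f.derivativeFun.derivativeFun = coeff m f.derivativeFun := by
  have E := congrArg (coeff m) heq
  rw [PowerSeries.coeff_mul, Finset.Nat.sum_antidiagonal_eq_sum_range_succ_mk,
    Finset.sum_range_succ] at E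
  have hc0 : coeff 0 (f.derivativeFun.compose g) = 1 := by
    rw [coeff_zero_eq_constantCoeff_apply, constantCoeff_compose _ hg0,
      ← coeff_zero_eq_constantCoeff_apply, coeff_derivativeFun_aux]
    simpa using hf1
  simp only [Nat.sub_self] at E
  rw [hc0, mul_one] at E
  exact E

lemma unique_coeff {f g : ℝ⟦X⟧} (hf0 : constantCoeff f = 0) (hf1 : coeff 1 f = 1)
    (hg0 : constantCoeff g = 0) (hfg : f.compose g = X)
    (heq : f.derivativeFun.derivativeFun * f.derivativeFun.compose g = f.derivativeFun) :
    ∀ n, coeff n f = sol n := by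
  have hg : g = PowerSeries.mk (icf f) := inverse_unique hf0 hf1 hg0 hfg
  subst hg
  intro n
  induction n using Nat.strong_induction_on with
  | _ n IH =>
    match n with
    | 0 => rw [coeff_zero_eq_constantCoeff_apply, sol_zero]; exact hf0
    | 1 => rw [sol_one]; exact hf1
    | (m+2) =>
      set fs := PowerSeries.mk sol with hfsdef
      set gs := PowerSeries.mk (icf fs) with hgsdef
      have E1 := coeff_eq_expand hf1 (constantCoeff_icf f) heq m
      have E2 := coeff_eq_expand coeff_one_mk_sol (constantCoeff_icf fs) sol_spec m
      -- all non-top terms agree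
      have hagree : ∀ i ≤ m + 1, coeff i f = coeff i fs := by
        intro i hi
        rw [hfsdef, coeff_mk]
        exact IH i (by omega)
      have hcomp : ∀ q ≤ m, coeff q (f.derivativeFun.compose (PowerSeries.mk (icf f)))
          = coeff q (fs.derivativeFun.compose gs) := by
        intro q hq
        apply coeff_compose_congr (constantCoeff_icf f)
        · intro i hi
          rw [coeff_derivativeFun_aux, coeff_derivativeFun_aux, hagree (i+1) (by omega)]
        · intro i hi
          rw [hgsdef, coeff_mk, coeff_mk]
          exact icf_congr hagree i (by omega)
      have hsum : ∀ p ∈ Finset.range m,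
          coeff p f.derivativeFun.derivativeFun
            * coeff (m - p) (f.derivativeFun.compose (PowerSeries.mk (icf f)))
          = coeff p fs.derivativeFun.derivativeFun
            * coeff (m - p) (fs.derivativeFun.compose gs) := by
        intro p hp
        rw [Finset.mem_range] at hp
        rw [hcomp (m - p) (by omega), coeff_derivativeFun_aux, coeff_derivativeFun_aux,
          coeff_derivativeFun_aux, coeff_derivativeFun_aux, hagree (p+2) (by omega)]
      rw [Finset.sum_congr rfl hsum] at E1
      have hRHS : coeff m f.derivativeFun = coeff m fs.derivativeFun := by
        rw [coeff_derivativeFun_aux, coeff_derivativeFun_aux, hagree (m+1) (by omega)]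
      rw [hRHS] at E1
      have htop : coeff m f.derivativeFun.derivativeFun
          = coeff m fs.derivativeFun.derivativeFun := by linarith [E1, E2]
      have hexp : ∀ (u : ℝ⟦X⟧), coeff m u.derivativeFun.derivativeFun
          = coeff (m+2) u * (((m:ℝ)+2) * ((m:ℝ)+1)) := by
        intro u
        rw [coeff_derivativeFun_aux, coeff_derivativeFun_aux]
        push_cast
        ring
      rw [hexp, hexp, hfsdef, coeff_mk] at htop
      exact mul_right_cancel₀ (by positivity) htop

lemma coeff_values {f g : ℝ⟦X⟧} (hf0 : constantCoeff f = 0) (hf1 : coeff 1 f = 1)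
    (hg0 : constantCoeff g = 0) (hfg : f.compose g = X)
    (heq : f.derivativeFun.derivativeFun * f.derivativeFun.compose g = f.derivativeFun) :
    coeff 2 f = 1/2 ∧ coeff 3 f = 0 ∧ coeff 4 f = 1/24 ∧ coeff 5 f = -(1/20) := by
  have hb0 : coeff 0 g = 0 := by rw [coeff_zero_eq_constantCoeff_apply]; exact hg0
  have ha0 : coeff 0 f = 0 := by rw [coeff_zero_eq_constantCoeff_apply]; exact hf0
  -- coefficients of powers of g
  have hg2_2 : coeff 2 (g^2) = coeff 1 g ^ 2 := by
    rw [pow_two, PowerSeries.coeff_mul, Finset.Nat.sum_antidiagonal_eq_sum_range_succ_mk]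
    simp [Finset.sum_range_succ, hb0]
    ring
  have hg2_3 : coeff 3 (g^2) = 2 * coeff 1 g * coeff 2 g := by
    rw [pow_two, PowerSeries.coeff_mul, Finset.Nat.sum_antidiagonal_eq_sum_range_succ_mk]
    simp [Finset.sum_range_succ, hb0]
    ring
  have hg2_1 : coeff 1 (g^2) = 0 := coeff_pow_zero_of_lt hg0 (by norm_num)
  have hg2_0 : coeff 0 (g^2) = 0 := coeff_pow_zero_of_lt hg0 (by norm_num)
  have hg3_3 : coeff 3 (g^3) = coeff 1 g ^ 3 := by
    have : (g:ℝ⟦X⟧)^3 = g^2 * g := by ring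
    rw [this, PowerSeries.coeff_mul, Finset.Nat.sum_antidiagonal_eq_sum_range_succ_mk]
    simp [Finset.sum_range_succ, hb0, hg2_0, hg2_1, hg2_2]
    ring
  -- coefficients of g from f ∘ g = X
  have hb1 : coeff 1 g = 1 := by
    have h := congrArg (coeff 1) hfg
    rw [coeff_compose] at h
    simp [Finset.sum_range_succ, ha0, hf1, PowerSeries.coeff_X] at h
    exact h
  have hb2 : coeff 2 g = - coeff 2 f := by
    have h := congrArg (coeff 2) hfg
    rw [coeff_compose] at h
    simp [Finset.sum_range_succ, ha0, hf1, hg2_2, hb1, PowerSeries.coeff_X] at h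
    linarith
  have hb3 : coeff 3 g = - coeff 3 f - coeff 2 f * (2 * coeff 2 g) := by
    have h := congrArg (coeff 3) hfg
    rw [coeff_compose] at h
    simp [Finset.sum_range_succ, ha0, hf1, hg2_3, hg3_3, hb1, PowerSeries.coeff_X] at h
    linarith
  -- coefficients of f' ∘ g
  have hD : ∀ k, coeff k f.derivativeFun = coeff (k+1) f * ((k:ℝ)+1) := by
    intro k
    rw [coeff_derivativeFun_aux]
    try push_cast
    try ring
  have hc1 : coeff 1 (f.derivativeFun.compose g) = 2 * coeff 2 f := by
    rw [coeff_compose]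
    simp [Finset.sum_range_succ, hD, hb1]
    ring
  have hc2 : coeff 2 (f.derivativeFun.compose g)
      = 2 * coeff 2 f * coeff 2 g + 3 * coeff 3 f := by
    rw [coeff_compose]
    simp [Finset.sum_range_succ, hD, hb1, hg2_2]
    ring
  have hc3 : coeff 3 (f.derivativeFun.compose g)
      = 2 * coeff 2 f * coeff 3 g + 3 * coeff 3 f * (2 * coeff 1 g * coeff 2 g)
        + 4 * coeff 4 f := by
    rw [coeff_compose]
    simp [Finset.sum_range_succ, hD, hb1, hg2_3, hg3_3]
    ring
  have hc0 : coeff 0 (f.derivativeFun.compose g) = 1 := by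
    rw [coeff_zero_eq_constantCoeff_apply, constantCoeff_compose _ hg0,
      ← coeff_zero_eq_constantCoeff_apply, coeff_derivativeFun_aux]
    simpa using hf1
  have hDD : ∀ p, coeff p f.derivativeFun.derivativeFun
      = coeff (p+2) f * (((p:ℝ)+2) * ((p:ℝ)+1)) := by
    intro p
    rw [coeff_derivativeFun_aux, coeff_derivativeFun_aux]
    push_cast
    ring
  have E0 := coeff_eq_expand hf1 hg0 heq 0
  have E1 := coeff_eq_expand hf1 hg0 heq 1
  have E2 := coeff_eq_expand hf1 hg0 heq 2
  have E3 := coeff_eq_expand hf1 hg0 heq 3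
  simp only [Finset.sum_range_succ, Finset.sum_range_zero, Nat.sub_self, zero_add] at E0 E1 E2 E3
  norm_num [-PowerSeries.coeff_zero_eq_constantCoeff] at E0 E1 E2 E3
  rw [hDD, hD] at E0
  rw [hDD, hDD, hD, hc1] at E1
  rw [hDD, hDD, hDD, hD, hc1, hc2] at E2
  rw [hDD, hDD, hDD, hDD, hD, hc1, hc2, hc3] at E3
  norm_num [hf1] at E0 E1 E2 E3
  -- now pure algebra
  have ha2 : coeff 2 f = 1/2 := by linarith
  rw [ha2] at E1
  have ha3 : coeff 3 f = 0 := by linarith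
  rw [ha2, ha3] at E2
  rw [ha2] at hb2
  rw [hb2] at E2
  have ha4 : coeff 4 f = 1/24 := by linarith
  rw [ha2, ha3, hb2] at hb3
  norm_num at hb3
  rw [ha2, ha3, ha4, hb1, hb2, hb3] at E3
  have ha5 : coeff 5 f = -(1/20) := by linarith
  exact ⟨ha2, ha3, ha4, ha5⟩

end StmtAux

open StmtAux in
/-- There is a unique formal power series `f ∈ ℝ⟦X⟧` with zero constant term and first
coefficient `1` admitting a compositional inverse `g` and satisfying the formal identity
`f'' * (f' ∘ f⁻¹) = f'`; its first coefficients are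
`f = X + X²/2 + 0·X³ + X⁴/24 - X⁵/20 + ⋯`. -/
theorem stmt_3 :
    (∃! f : PowerSeries ℝ, PowerSeries.constantCoeff f = 0 ∧ PowerSeries.coeff 1 f = 1 ∧
      ∃ g : PowerSeries ℝ, PowerSeries.constantCoeff g = 0 ∧
        PowerSeries.compose f g = PowerSeries.X ∧ PowerSeries.compose g f = PowerSeries.X ∧
        f.derivativeFun.derivativeFun * PowerSeries.compose f.derivativeFun g
          = f.derivativeFun) ∧
    (∀ f : PowerSeries ℝ, (PowerSeries.constantCoeff f = 0 ∧ PowerSeries.coeff 1 f = 1 ∧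
      ∃ g : PowerSeries ℝ, PowerSeries.constantCoeff g = 0 ∧
        PowerSeries.compose f g = PowerSeries.X ∧ PowerSeries.compose g f = PowerSeries.X ∧
        f.derivativeFun.derivativeFun * PowerSeries.compose f.derivativeFun g
          = f.derivativeFun) →
      PowerSeries.coeff 2 f = 1 / 2 ∧ PowerSeries.coeff 3 f = 0 ∧
      PowerSeries.coeff 4 f = 1 / 24 ∧ PowerSeries.coeff 5 f = -(1 / 20)) := by
  constructor
  · refine ⟨PowerSeries.mk sol, ⟨constantCoeff_mk_sol, coeff_one_mk_sol,
      PowerSeries.mk (icf (PowerSeries.mk sol)), constantCoeff_icf _,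
      icf_spec constantCoeff_mk_sol coeff_one_mk_sol,
      icf_spec₂ constantCoeff_mk_sol coeff_one_mk_sol, sol_spec⟩, ?_⟩
    rintro y ⟨hy0, hy1, g, hg0, hfg, _, heq⟩
    ext n
    rw [unique_coeff hy0 hy1 hg0 hfg heq n, coeff_mk]
  · rintro f ⟨hf0, hf1, g, hg0, hfg, _, heq⟩
    exact coeff_values hf0 hf1 hg0 hfg heq
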